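/- If G is a cycle of even length n ≥ 4 and k ≥ 1 is an odd integer, then for every k-fold cover 𝓗 of G, G admits an ((k−1)/(2k), 𝓗)-coloring; that is, θ_DP(G, k) ≥ (k−1)/(2k) for every odd k. -/
import Mathlib


open scoped Classical

/-- A cover (in the sense of DP-coloring) of a simple graph `G`: a graph `H` on a finite
vertex set `W`, together with an assignment `L` of "lists" `L u ⊆ W` to the vertices of `G`,
such that the lists partition `W`, each list spans a clique, edges between distinct lists only
occur between lists of adjacent vertices, and for each edge `u v` of `G` the edges of `H`
between `L u` and `L v` form a (possibly empty) matching. -/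
structure DPCover {V : Type} (G : SimpleGraph V) where
  W : Type
  Wfin : Fintype W
  H : SimpleGraph W
  L : V → Set W
  part : ∀ x : W, ∃! u : V, x ∈ L u
  clique : ∀ u : V, ∀ x ∈ L u, ∀ y ∈ L u, x ≠ y → H.Adj x y
  cross : ∀ u v : V, u ≠ v → (∃ x ∈ L u, ∃ y ∈ L v, H.Adj x y) → G.Adj u v
  matching : ∀ u v : V, G.Adj u v → ∀ x ∈ L u, ∀ y ∈ L v, ∀ y' ∈ L v,
      H.Adj x y → H.Adj x y' → y = y'

namespace DPCover

variable {V : Type} {G : SimpleGraph V}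

/-- A cover is `k`-fold if every list has exactly `k` elements. -/
def IsKFold (C : DPCover G) (k : ℕ) : Prop := ∀ u : V, (C.L u).ncard = k

/-- A set of vertices of the cover graph is quasi-independent if it spans no cross-edges,
i.e. any edge of `H` inside `S` lies within a single list. -/
def QuasiIndep (C : DPCover G) (S : Set C.W) : Prop :=
  ∀ x ∈ S, ∀ y ∈ S, C.H.Adj x y → ∃ u : V, x ∈ C.L u ∧ y ∈ C.L u

/-- `G` has an `(η, 𝓗)`-coloring: a quasi-independent set meeting each list `L u`
in at least `η * |L u|` elements. -/
def HasFracColoring (C : DPCover G) (η : ℝ) : Prop :=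
  ∃ S : Set C.W, C.QuasiIndep S ∧
    ∀ u : V, η * ((C.L u).ncard : ℝ) ≤ ((C.L u ∩ S).ncard : ℝ)

/-- `G` has an `𝓗`-coloring: an independent set of `H` meeting every list in exactly
one vertex (equivalently, an independent set of size `|V(G)|`). -/
def HasColoring (C : DPCover G) : Prop :=
  ∃ S : Set C.W, (∀ x ∈ S, ∀ y ∈ S, ¬ C.H.Adj x y) ∧ ∀ u : V, (C.L u ∩ S).ncard = 1

end DPCover

/-- `θ_DP(G, k)`: the largest `η ∈ [0,1]` such that `G` admits an `(η, 𝓗)`-coloring for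
every `k`-fold cover `𝓗` of `G`. -/
noncomputable def thetaDP {V : Type} (G : SimpleGraph V) (k : ℕ) : ℝ :=
  sSup {η : ℝ | 0 ≤ η ∧ η ≤ 1 ∧
    ∀ C : DPCover G, C.IsKFold k → C.HasFracColoring η}

/-- The fractional DP-chromatic number `χ*_DP(G) = inf_{k ≥ 1} θ_DP(G, k)⁻¹`,
as an extended nonnegative real (so that `θ_DP(G,k) = 0` contributes `∞`). -/
noncomputable def chiDPStar {V : Type} (G : SimpleGraph V) : ENNReal :=
  ⨅ k ∈ {k : ℕ | 1 ≤ k}, (ENNReal.ofReal (thetaDP G k))⁻¹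

/-- A directed path of length `n` from `u` to `v` in the digraph given by the relation `D`:
a list of `n+1` distinct vertices starting at `u`, ending at `v`, with consecutive vertices
related by `D`. -/
def DirPath {V : Type} (D : V → V → Prop) (u v : V) (n : ℕ) : Prop :=
  ∃ l : List V, l.Chain' D ∧ l.Nodup ∧ l.head? = some u ∧ l.getLast? = some v ∧
    l.length = n + 1


lemma defect_lemma {α : Type} [Fintype α] [DecidableEq α] (σ : Equiv.Perm α) :
    ∀ s : ℕ, s ≤ Fintype.card α → ∃ D : Finset α, D.card = s ∧ (D \ D.image σ).card ≤ 1 := by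
  intro s
  induction s with
  | zero => intro _; exact ⟨∅, by simp⟩
  | succ s ih =>
    intro hs
    obtain ⟨D, hcard, hdef⟩ := ih (Nat.le_of_succ_le hs)
    rcases Finset.eq_empty_or_nonempty (D \ D.image σ) with he | hne
    · have himg : D.image σ = D := by
        have hsub : D ⊆ D.image σ := by
          intro x hx
          by_contra hx'
          exact (Finset.notMem_empty x) (he ▸ Finset.mem_sdiff.mpr ⟨hx, hx'⟩)
        exact (Finset.eq_of_subset_of_card_le hsub
          (le_of_eq (Finset.card_image_of_injective _ σ.injective))).symm
      have hne' : D ≠ Finset.univ := by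
        intro h
        rw [h, Finset.card_univ] at hcard
        omega
      obtain ⟨x, hx⟩ : ∃ x, x ∉ D := by
        by_contra h
        push_neg at h
        exact hne' (Finset.eq_univ_iff_forall.mpr h)
      refine ⟨insert x D, by rw [Finset.card_insert_of_notMem hx, hcard], ?_⟩
      have hss : insert x D \ (insert x D).image σ ⊆ {x} := by
        intro y hy
        rw [Finset.mem_sdiff, Finset.mem_insert] at hy
        obtain ⟨hy1 | hy1, hy2⟩ := hy
        · simp [hy1]
        · exfalso
          apply hy2
          rw [Finset.image_insert]
          exact Finset.mem_insert_of_mem (by rw [himg]; exact hy1)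
      calc (insert x D \ (insert x D).image σ).card ≤ ({x} : Finset α).card :=
            Finset.card_le_card hss
        _ = 1 := Finset.card_singleton x
    · obtain ⟨x, hx⟩ := hne
      rw [Finset.mem_sdiff] at hx
      obtain ⟨hxD, hxI⟩ := hx
      have hwD : σ.symm x ∉ D := by
        intro h
        exact hxI (Finset.mem_image.mpr ⟨σ.symm x, h, by simp⟩)
      refine ⟨insert (σ.symm x) D, by rw [Finset.card_insert_of_notMem hwD, hcard], ?_⟩
      have hss : insert (σ.symm x) D \ (insert (σ.symm x) D).image σ ⊆ {σ.symm x} := by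
        intro y hy
        rw [Finset.mem_sdiff, Finset.mem_insert] at hy
        obtain ⟨hy1 | hy1, hy2⟩ := hy
        · simp [hy1]
        · exfalso
          rw [Finset.image_insert] at hy2
          have hyx : y ≠ x := by
            intro h
            apply hy2
            subst h
            simp
          have hyI : y ∉ D.image σ := fun h => hy2 (Finset.mem_insert_of_mem h)
          have h1 : y ∈ D \ D.image σ := Finset.mem_sdiff.mpr ⟨hy1, hyI⟩
          have h2 : x ∈ D \ D.image σ := Finset.mem_sdiff.mpr ⟨hxD, hxI⟩
          exact hyx (Finset.card_le_one.mp hdef y h1 x h2)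
      calc (insert (σ.symm x) D \ (insert (σ.symm x) D).image σ).card
          ≤ ({σ.symm x} : Finset α).card := Finset.card_le_card hss
        _ = 1 := Finset.card_singleton _

lemma pattern_lemma {α : Type} [Fintype α] [DecidableEq α] (σ : Equiv.Perm α) (m : ℕ)
    (hcard : Fintype.card α = 2 * m + 1) :
    ∃ A B Pc D : Finset α, A.card = m ∧ B.card = m ∧ Pc.card = m ∧ D.card = m ∧
      Disjoint A B ∧ Disjoint B Pc ∧ Disjoint Pc D ∧ Disjoint A (D.image σ) := by
  obtain ⟨D, hD, hdef⟩ := defect_lemma σ m (by omega)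
  have himg : (D.image σ).card = m := by
    rw [Finset.card_image_of_injective _ σ.injective, hD]
  have hcompl : (D.image σ)ᶜ.card = m + 1 := by
    rw [Finset.card_compl, himg, hcard]
    omega
  obtain ⟨A, hAsub, hA⟩ := Finset.exists_subset_card_eq (show m ≤ (D.image σ)ᶜ.card by omega)
  have hADisj : Disjoint A (D.image σ) := by
    rw [Finset.disjoint_left]
    intro a ha ha'
    exact (Finset.mem_compl.mp (hAsub ha)) ha'
  -- |A ∩ D| ≤ 1
  have hAD : (A ∩ D).card ≤ 1 := by
    refine le_trans (Finset.card_le_card ?_) hdef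
    intro x hx
    rw [Finset.mem_inter] at hx
    exact Finset.mem_sdiff.mpr ⟨hx.2, Finset.mem_compl.mp (hAsub hx.1)⟩
  -- |Aᶜ ∩ Dᶜ| = (2m+1) - |A ∪ D| ∈ [1, 2]
  have hunion : (A ∪ D).card + (A ∩ D).card = A.card + D.card :=
    Finset.card_union_add_card_inter A D
  have hle : (A ∪ D).card ≤ 2 * m + 1 := by
    have := Finset.card_le_univ (A ∪ D)
    rwa [hcard] at this
  have hcc : (A ∪ D)ᶜ.card + (A ∪ D).card = 2 * m + 1 := by
    rw [Finset.card_compl, hcard]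
    omega
  have hccpos : 1 ≤ (A ∪ D)ᶜ.card := by omega
  obtain ⟨e, he⟩ := Finset.card_pos.mp hccpos
  have heA : e ∉ A := by
    have := Finset.mem_compl.mp he
    intro h
    exact this (Finset.mem_union_left _ h)
  have heAc : e ∈ Aᶜ := Finset.mem_compl.mpr heA
  have hAc : Aᶜ.card = m + 1 := by
    rw [Finset.card_compl, hA, hcard]
    omega
  set B := Aᶜ.erase e with hBdef
  have hB : B.card = m := by
    rw [hBdef, Finset.card_erase_of_mem heAc, hAc]
    omega
  have hABdisj : Disjoint A B := by
    rw [Finset.disjoint_left]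
    intro a ha hab
    exact (Finset.mem_compl.mp (Finset.erase_subset _ _ hab)) ha
  have hDc : Dᶜ.card = m + 1 := by
    rw [Finset.card_compl, hD, hcard]
    omega
  have hDB : (Dᶜ ∩ B) ⊆ ((A ∪ D)ᶜ).erase e := by
    intro x hx
    rw [Finset.mem_inter] at hx
    obtain ⟨hx1, hx2⟩ := hx
    rw [hBdef, Finset.mem_erase] at hx2
    refine Finset.mem_erase.mpr ⟨hx2.1, ?_⟩
    rw [Finset.compl_union, Finset.mem_inter]
    exact ⟨hx2.2, hx1⟩
  have hDBcard : (Dᶜ ∩ B).card ≤ 1 := by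
    have h1 : (((A ∪ D)ᶜ).erase e).card = (A ∪ D)ᶜ.card - 1 :=
      Finset.card_erase_of_mem he
    have h2 := Finset.card_le_card hDB
    omega
  have hC0 : (Dᶜ ∩ B).card + (Dᶜ \ B).card = Dᶜ.card :=
    Finset.card_inter_add_card_sdiff _ _
  obtain ⟨Pc, hPcsub, hPc⟩ := Finset.exists_subset_card_eq
    (show m ≤ (Dᶜ \ B).card by omega)
  refine ⟨A, B, Pc, D, hA, hB, hPc, hD, hABdisj, ?_, ?_, hADisj⟩
  · rw [Finset.disjoint_left]
    intro b hb hbc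
    exact (Finset.mem_sdiff.mp (hPcsub hbc)).2 hb
  · rw [Finset.disjoint_left]
    intro c hc hcd
    exact Finset.mem_compl.mp (Finset.mem_sdiff.mp (hPcsub hc)).1 hcd

lemma ext_lemma {W : Type} [Fintype W] (M N : Finset W) (hMN : M.card = N.card)
    (R : W → W → Prop)
    (hfun : ∀ x ∈ M, ∀ y ∈ N, ∀ y' ∈ N, R x y → R x y' → y = y')
    (hinj : ∀ x ∈ M, ∀ x' ∈ M, ∀ y ∈ N, R x y → R x' y → x = x') :
    ∃ g : W → W, (∀ x ∈ M, g x ∈ N) ∧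
      (∀ x ∈ M, ∀ x' ∈ M, g x = g x' → x = x') ∧
      (∀ x ∈ M, ∀ y ∈ N, R x y → g x = y) := by
  classical
  set D := M.filter (fun x => ∃ y ∈ N, R x y) with hDdef
  have hDM : D ⊆ M := Finset.filter_subset _ _
  have mchoice : ∀ x ∈ D, ∃ y, y ∈ N ∧ R x y := by
    intro x hx
    obtain ⟨y, hy1, hy2⟩ := (Finset.mem_filter.mp hx).2
    exact ⟨y, hy1, hy2⟩
  choose! f hfN hfR using mchoice
  set E := D.image f with hEdef
  have hEN : E ⊆ N := by
    intro y hy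
    obtain ⟨x, hx, rfl⟩ := Finset.mem_image.mp hy
    exact hfN x hx
  have hfinj : ∀ x ∈ D, ∀ x' ∈ D, f x = f x' → x = x' := by
    intro x hx x' hx' h
    exact hinj x (hDM hx) x' (hDM hx') (f x) (hfN x hx) (hfR x hx) (h ▸ hfR x' hx')
  have hEcard : E.card = D.card := Finset.card_image_of_injOn hfinj
  have hrest : Fintype.card {x // x ∈ (M \ D)} = Fintype.card {x // x ∈ (N \ E)} := by
    rw [Fintype.card_coe, Fintype.card_coe, Finset.card_sdiff_of_subset hDM, Finset.card_sdiff_of_subset hEN,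
      hEcard, hMN]
  let e : {x // x ∈ (M \ D)} ≃ {x // x ∈ (N \ E)} := Fintype.equivOfCardEq hrest
  refine ⟨fun x => if hx : x ∈ D then f x else if hx' : x ∈ M \ D then (e ⟨x, hx'⟩ : W) else x,
    ?_, ?_, ?_⟩
  · intro x hx
    by_cases hxD : x ∈ D
    · simpa [hxD] using hfN x hxD
    · have hx' : x ∈ M \ D := Finset.mem_sdiff.mpr ⟨hx, hxD⟩
      simp only [hxD, dif_neg, not_false_iff, hx', dif_pos]
      exact (Finset.mem_sdiff.mp (e ⟨x, hx'⟩).2).1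
  · intro x hx x' hx' h
    dsimp only at h
    by_cases hxD : x ∈ D <;> by_cases hxD' : x' ∈ D
    · rw [dif_pos hxD, dif_pos hxD'] at h
      exact hfinj x hxD x' hxD' h
    · have hm' : x' ∈ M \ D := Finset.mem_sdiff.mpr ⟨hx', hxD'⟩
      rw [dif_pos hxD, dif_neg hxD', dif_pos hm'] at h
      exfalso
      have h1 : f x ∈ E := Finset.mem_image_of_mem f hxD
      have h2 : ((e ⟨x', hm'⟩ : {x // x ∈ N \ E}) : W) ∉ E :=
        (Finset.mem_sdiff.mp (e ⟨x', hm'⟩).2).2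
      exact h2 (h ▸ h1)
    · have hm : x ∈ M \ D := Finset.mem_sdiff.mpr ⟨hx, hxD⟩
      rw [dif_neg hxD, dif_pos hm, dif_pos hxD'] at h
      exfalso
      have h1 : f x' ∈ E := Finset.mem_image_of_mem f hxD'
      have h2 : ((e ⟨x, hm⟩ : {x // x ∈ N \ E}) : W) ∉ E :=
        (Finset.mem_sdiff.mp (e ⟨x, hm⟩).2).2
      exact h2 (h ▸ h1)
    · have hm : x ∈ M \ D := Finset.mem_sdiff.mpr ⟨hx, hxD⟩
      have hm' : x' ∈ M \ D := Finset.mem_sdiff.mpr ⟨hx', hxD'⟩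
      rw [dif_neg hxD, dif_pos hm, dif_neg hxD', dif_pos hm'] at h
      have := e.injective (Subtype.ext h)
      exact congrArg Subtype.val this
  · intro x hx y hy hR
    have hxD : x ∈ D := Finset.mem_filter.mpr ⟨hx, y, hy, hR⟩
    dsimp only
    rw [dif_pos hxD]
    exact (hfun x hx y hy (f x) (hfN x hxD) hR (hfR x hxD)).symm


lemma main_coloring (n : ℕ) (hn : 4 ≤ n) (heven : Even n) (m : ℕ)
    (C : DPCover (SimpleGraph.cycleGraph n)) (hC : C.IsKFold (2 * m + 1)) :
    ∃ S : Set C.W, C.QuasiIndep S ∧ ∀ u, m ≤ (C.L u ∩ S).ncard := by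
  classical
  haveI := C.Wfin
  haveI : NeZero n := ⟨by omega⟩
  set Lf : Fin n → Finset C.W := fun u => (C.L u).toFinset with hLfdef
  have hmemLf : ∀ (u : Fin n) (x : C.W), x ∈ Lf u ↔ x ∈ C.L u := by
    intro u x
    rw [hLfdef]
    exact Set.mem_toFinset
  have hLfcard : ∀ u, (Lf u).card = 2 * m + 1 := by
    intro u
    rw [hLfdef]
    dsimp only
    rw [← Set.ncard_eq_toFinset_card']
    exact hC u
  have hone : ((1 : Fin n) : ℕ) = 1 := by
    rw [Fin.val_one']
    exact Nat.mod_eq_of_lt (by omega)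
  have hsub1 : ∀ u v : Fin n, u - v = 1 ↔ u = v + 1 := by
    intro u v
    rw [sub_eq_iff_eq_add, add_comm]
  have hAdjSucc : ∀ i : Fin n, (SimpleGraph.cycleGraph n).Adj i (i + 1) := by
    intro i
    rw [SimpleGraph.cycleGraph_adj']
    right
    rw [(hsub1 (i + 1) i).mpr rfl]
    exact hone
  have hAdjCases : ∀ u v : Fin n, (SimpleGraph.cycleGraph n).Adj u v →
      u = v + 1 ∨ v = u + 1 := by
    intro u v h
    rw [SimpleGraph.cycleGraph_adj'] at h
    rcases h with h | h
    · left
      rw [← hsub1]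
      exact Fin.ext (h.trans hone.symm)
    · right
      rw [← hsub1]
      exact Fin.ext (h.trans hone.symm)
  have hg : ∀ i : Fin n, ∃ g : C.W → C.W, (∀ x ∈ Lf i, g x ∈ Lf (i + 1)) ∧
      (∀ x ∈ Lf i, ∀ x' ∈ Lf i, g x = g x' → x = x') ∧
      (∀ x ∈ Lf i, ∀ y ∈ Lf (i + 1), C.H.Adj x y → g x = y) := by
    intro i
    apply ext_lemma (Lf i) (Lf (i + 1)) (by rw [hLfcard, hLfcard]) C.H.Adj
    · intro x hx y hy y' hy' h h'
      exact C.matching i (i + 1) (hAdjSucc i) x ((hmemLf _ _).mp hx) y ((hmemLf _ _).mp hy)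
        y' ((hmemLf _ _).mp hy') h h'
    · intro x hx x' hx' y hy h h'
      exact C.matching (i + 1) i (hAdjSucc i).symm y ((hmemLf _ _).mp hy) x ((hmemLf _ _).mp hx)
        x' ((hmemLf _ _).mp hx') h.symm h'.symm
  choose g hg1 hg2 hg3 using hg
  set idx : ℕ → Fin n := fun j => ⟨j % n, Nat.mod_lt j (by omega)⟩ with hidxdef
  set Gc : ℕ → C.W → C.W :=
    fun p => Nat.rec (motive := fun _ => C.W → C.W) id (fun j F => g (idx j) ∘ F) p with hGcdef
  have hGc0 : ∀ x, Gc 0 x = x := fun x => rfl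
  have hGcS : ∀ p x, Gc (p + 1) x = g (idx p) (Gc p x) := fun p x => rfl
  have hidxval : ∀ i : Fin n, idx i.1 = i := by
    intro i
    apply Fin.ext
    simp [hidxdef, Nat.mod_eq_of_lt i.isLt]
  have hidxsucc : ∀ p : ℕ, p < n → idx p + 1 = idx (p + 1) := by
    intro p hp
    apply Fin.ext
    rw [Fin.val_add, hone]
    show (p % n + 1) % n = (p + 1) % n
    rw [Nat.mod_eq_of_lt hp]
  have hmaps : ∀ p, p ≤ n → (∀ x ∈ Lf (idx 0), Gc p x ∈ Lf (idx p)) ∧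
      (∀ x ∈ Lf (idx 0), ∀ x' ∈ Lf (idx 0), Gc p x = Gc p x' → x = x') := by
    intro p
    induction p with
    | zero => intro _; exact ⟨fun x hx => hx, fun x _ x' _ h => h⟩
    | succ p ih =>
      intro hp
      obtain ⟨h1, h2⟩ := ih (by omega)
      have hplt : p < n := by omega
      constructor
      · intro x hx
        rw [hGcS]
        have := hg1 (idx p) (Gc p x) (h1 x hx)
        rwa [hidxsucc p hplt] at this
      · intro x hx x' hx' h
        rw [hGcS, hGcS] at h
        exact h2 x hx x' hx' (hg2 (idx p) (Gc p x) (h1 x hx) (Gc p x') (h1 x' hx') h)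
  have hidxn : idx n = idx 0 := by
    apply Fin.ext
    show n % n = 0 % n
    simp
  obtain ⟨hmap_n, hinj_n⟩ := hmaps n le_rfl
  set L0 := Lf (idx 0) with hL0def
  have hmapn' : ∀ x ∈ L0, Gc n x ∈ L0 := by
    intro x hx
    have := hmap_n x hx
    rwa [hidxn] at this
  set σfun : {x // x ∈ L0} → {x // x ∈ L0} := fun a => ⟨Gc n a.1, hmapn' a.1 a.2⟩ with hσfundef
  have hσinj : Function.Injective σfun := by
    intro a b h
    exact Subtype.ext (hinj_n a.1 a.2 b.1 b.2 (congrArg Subtype.val h))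
  set σ : Equiv.Perm {x // x ∈ L0} := Equiv.ofBijective σfun
    (Finite.injective_iff_bijective.mp hσinj) with hσdef
  have hσval : ∀ a : {x // x ∈ L0}, (σ a : C.W) = Gc n a.1 := fun a => rfl
  obtain ⟨A, B, Pc, Pd, hA, hB, hPc, hPd, dAB, dBC, dCD, dAD⟩ :=
    pattern_lemma σ m (by rw [Fintype.card_coe, hL0def, hLfcard])
  set Qf : ℕ → Finset {x // x ∈ L0} := fun j =>
    match j with
    | 0 => A
    | 1 => B
    | (j' + 2) => (match j' % 2 with | 0 => Pc | _ + 1 => Pd)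
    with hQfdef
  have hQ0 : Qf 0 = A := rfl
  have hQ1 : Qf 1 = B := rfl
  have hQ2e : ∀ j', j' % 2 = 0 → Qf (j' + 2) = Pc := by
    intro j' h
    show (match j' % 2 with | 0 => Pc | _ + 1 => Pd) = Pc
    rw [h]
  have hQ2o : ∀ j', j' % 2 = 1 → Qf (j' + 2) = Pd := by
    intro j' h
    show (match j' % 2 with | 0 => Pc | _ + 1 => Pd) = Pd
    rw [h]
  have hQcard : ∀ j, (Qf j).card = m := by
    intro j
    match j with
    | 0 => rw [hQ0]; exact hA
    | 1 => rw [hQ1]; exact hB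
    | (j' + 2) =>
      rcases Nat.mod_two_eq_zero_or_one j' with h | h
      · rw [hQ2e j' h]; exact hPc
      · rw [hQ2o j' h]; exact hPd
  have hQdisj : ∀ j : ℕ, Disjoint (Qf j) (Qf (j + 1)) := by
    intro j
    match j with
    | 0 => rw [hQ0, hQ1]; exact dAB
    | 1 =>
      rw [hQ1, show (1 + 1 : ℕ) = 0 + 2 from rfl, hQ2e 0 rfl]
      exact dBC
    | (j' + 2) =>
      rw [show j' + 2 + 1 = (j' + 1) + 2 from rfl]
      rcases Nat.mod_two_eq_zero_or_one j' with h | h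
      · rw [hQ2e j' h, hQ2o (j' + 1) (by omega)]
        exact dCD
      · rw [hQ2o j' h, hQ2e (j' + 1) (by omega)]
        exact dCD.symm
  set Si : Fin n → Finset C.W := fun i => (Qf i.1).image (fun a => Gc i.1 a.1) with hSidef
  have hSiL : ∀ i : Fin n, ∀ x ∈ Si i, x ∈ Lf i := by
    intro i x hx
    rw [hSidef] at hx
    obtain ⟨a, ha, rfl⟩ := Finset.mem_image.mp hx
    have := (hmaps i.1 (le_of_lt i.isLt)).1 a.1 a.2
    rwa [hidxval i] at this
  have hSicard : ∀ i : Fin n, (Si i).card = m := by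
    intro i
    rw [hSidef]
    dsimp only
    have hinj : Set.InjOn (fun a : {x // x ∈ L0} => Gc i.1 a.1) (Qf i.1) := by
      intro a ha b hb h
      exact Subtype.ext ((hmaps i.1 (le_of_lt i.isLt)).2 a.1 a.2 b.1 b.2 h)
    rw [Finset.card_image_of_injOn hinj, hQcard]
  have hNoEdge : ∀ i : Fin n, ∀ x ∈ Si i, ∀ y ∈ Si (i + 1), ¬ C.H.Adj x y := by
    intro i x hx y hy hadj
    have hxL : x ∈ Lf i := hSiL i x hx
    have hyL : y ∈ Lf (i + 1) := hSiL (i + 1) y hy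
    rw [hSidef] at hx hy
    obtain ⟨a, ha, rfl⟩ := Finset.mem_image.mp hx
    obtain ⟨b, hb, hyeq⟩ := Finset.mem_image.mp hy
    have hgy : g i (Gc i.1 a.1) = y := hg3 i _ hxL y hyL hadj
    have hGa : Gc (i.1 + 1) a.1 = y := by
      rw [hGcS, hidxval i]
      exact hgy
    by_cases hlt : i.1 + 1 < n
    · have hi1 : (i + 1).1 = i.1 + 1 := by
        rw [Fin.val_add, hone, Nat.mod_eq_of_lt hlt]
      rw [hi1] at hyeq hb
      have hab : a.1 = b.1 :=
        (hmaps (i.1 + 1) (by omega)).2 a.1 a.2 b.1 b.2 (hGa.trans hyeq.symm)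
      have hamem : a ∈ Qf (i.1 + 1) := by
        rw [show a = b from Subtype.ext hab]
        exact hb
      exact Finset.disjoint_left.mp (hQdisj i.1) ha hamem
    · have hival : i.1 + 1 = n := by
        have := i.isLt
        omega
      have hi0 : (i + 1).1 = 0 := by
        rw [Fin.val_add, hone, hival, Nat.mod_self]
      rw [hi0] at hb hyeq
      rw [hGc0] at hyeq
      have hσa : (σ a : C.W) = y := by
        rw [hσval]
        rw [hival] at hGa
        exact hGa
      have hba : b = σ a := Subtype.ext (by rw [hyeq, hσa])
      have haPd : a ∈ Pd := by
        have h2 : 2 ≤ i.1 := by omega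
        obtain ⟨j', hj'⟩ : ∃ j', i.1 = j' + 2 := ⟨i.1 - 2, by omega⟩
        have h3 : j' % 2 = 1 := by
          rcases heven with ⟨c, hc⟩
          omega
        rw [hj', hQ2o j' h3] at ha
        exact ha
      have hbA : b ∈ A := by
        rwa [hQ0] at hb
      rw [hba] at hbA
      exact Finset.disjoint_left.mp dAD hbA (Finset.mem_image_of_mem σ haPd)
  refine ⟨{x | ∃ i : Fin n, x ∈ Si i}, ?_, ?_⟩
  · intro x hx y hy hadj
    obtain ⟨i, hxi⟩ := hx
    obtain ⟨j, hyj⟩ := hy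
    by_cases hij : i = j
    · subst hij
      exact ⟨i, (hmemLf _ _).mp (hSiL i x hxi), (hmemLf _ _).mp (hSiL i y hyj)⟩
    · exfalso
      have hGadj := C.cross i j hij ⟨x, (hmemLf _ _).mp (hSiL i x hxi), y,
        (hmemLf _ _).mp (hSiL j y hyj), hadj⟩
      rcases hAdjCases i j hGadj with h | h
      · exact hNoEdge j y hyj x (by rw [← h]; exact hxi) hadj.symm
      · exact hNoEdge i x hxi y (by rw [← h]; exact hyj) hadj
  · intro u
    have hsub : ↑(Si u) ⊆ C.L u ∩ {x | ∃ i : Fin n, x ∈ Si i} := by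
      intro x hx
      rw [Finset.mem_coe] at hx
      exact ⟨(hmemLf _ _).mp (hSiL u x hx), ⟨u, hx⟩⟩
    have := Set.ncard_le_ncard hsub (Set.toFinite _)
    rwa [Set.ncard_coe_finset, hSicard] at this

/-- If `G` is a cycle of even length `n ≥ 4` and `k ≥ 1` is odd, then
every `k`-fold cover `𝓗` of `G` admits a `((k-1)/(2k), 𝓗)`-coloring; that is,
`θ_DP(G, k) ≥ (k-1)/(2k)` for every odd `k`. -/
theorem stmt11 (n : ℕ) (hn : 4 ≤ n) (heven : Even n) (k : ℕ) (hk : 1 ≤ k) (hodd : Odd k) :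
    (∀ C : DPCover (SimpleGraph.cycleGraph n), C.IsKFold k →
      C.HasFracColoring (((k : ℝ) - 1) / (2 * (k : ℝ)))) ∧
    ((k : ℝ) - 1) / (2 * (k : ℝ)) ≤ thetaDP (SimpleGraph.cycleGraph n) k := by
  obtain ⟨m, hm⟩ := hodd
  have hkR : (1 : ℝ) ≤ (k : ℝ) := by exact_mod_cast hk
  have hkpos : (0 : ℝ) < (k : ℝ) := by linarith
  have hmain : ∀ C : DPCover (SimpleGraph.cycleGraph n), C.IsKFold k →
      C.HasFracColoring (((k : ℝ) - 1) / (2 * (k : ℝ))) := by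
    intro C hC
    obtain ⟨S, hQ, hcount⟩ := main_coloring n hn heven m C (by rwa [← hm])
    refine ⟨S, hQ, ?_⟩
    intro u
    rw [hC u]
    have hne : ((2 : ℝ) * m + 1) ≠ 0 := by positivity
    have h2 : ((k : ℝ) - 1) / (2 * (k : ℝ)) * (k : ℝ) = m := by
      rw [hm]
      push_cast
      field_simp
      ring
    rw [h2]
    exact_mod_cast hcount u
  refine ⟨hmain, ?_⟩
  have h0 : (0 : ℝ) ≤ ((k : ℝ) - 1) / (2 * (k : ℝ)) :=
    div_nonneg (by linarith) (by linarith)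
  have h1 : ((k : ℝ) - 1) / (2 * (k : ℝ)) ≤ 1 := by
    rw [div_le_one (by linarith)]
    linarith
  exact le_csSup ⟨1, fun η hη => hη.2.1⟩ ⟨h0, h1, hmain⟩
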